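/- Let M⋆ = sup_{z ∈ 𝕋^m} |A⋆(z)|. For every M ∈ (0,∞) and all continuous functions B₁, B₂ : 𝕋^m → ℝ with sup|B₁| ≤ M and sup|B₂| ≤ M, one has d_TV(μ_{B₁}, μ_{B₂}) ≤ 2 e^{4(M + M⋆)} · sup_{z ∈ 𝕋^m} |B₁(z) − B₂(z)|. -/

import Mathlib

open MeasureTheory

noncomputable section

/-- `E n` is the Euclidean space `ℝ^n`; the flat torus `𝕋^n` is modelled by
`1`-periodic functions on `E n`, with the box `[0,1)^n` as fundamental domain,
carrying the (normalized, since the box has volume one) Lebesgue measure. -/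
abbrev E (n : ℕ) : Type := EuclideanSpace ℝ (Fin n)

/-- The fundamental domain `[0,1)^n` of the torus `𝕋^n`. -/
def torusBox (n : ℕ) : Set (E n) := {x : E n | ∀ i, x i ∈ Set.Ico (0 : ℝ) 1}

/-- The `j`-th coordinate unit vector. -/
def e1 {n : ℕ} (j : Fin n) : E n := EuclideanSpace.single j 1

/-- A function on the torus `𝕋^n`: a function on `ℝ^n` which is `1`-periodic in
each coordinate. -/
def PerZ {n : ℕ} {α : Type*} (f : E n → α) : Prop :=
  ∀ (x : E n) (j : Fin n), f (x + e1 j) = f x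

/-- A function on `𝕋^k × 𝕋^m`. -/
def PerZ2 {k m : ℕ} {α : Type*} (f : E k × E m → α) : Prop :=
  (∀ (y : E k) (z : E m) (j : Fin k), f (y + e1 j, z) = f (y, z)) ∧
  (∀ (y : E k) (z : E m) (j : Fin m), f (y, z + e1 j) = f (y, z))

/-- The quotient (torus) distance on `𝕋^n`. -/
def tdist {n : ℕ} (x y : E n) : ℝ :=
  ⨅ v : Fin n → ℤ, ‖x - y + (WithLp.equiv 2 (Fin n → ℝ)).symm (fun i => (v i : ℝ))‖

/-- The quotient (torus) distance on `𝕋^k × 𝕋^m`. -/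
def tdist2 {k m : ℕ} (x y : E k × E m) : ℝ :=
  Real.sqrt (tdist x.1 y.1 ^ 2 + tdist x.2 y.2 ^ 2)

/-- The gradient `∇_z V` in the `z` variable. -/
def zgrad {k m : ℕ} (V : E k × E m → ℝ) (y : E k) (z : E m) : E m :=
  gradient (fun z' => V (y, z')) z

/-- The Laplacian on `E n`. -/
def lap {n : ℕ} (A : E n → ℝ) (z : E n) : ℝ :=
  ∑ j, fderiv ℝ (fun w => fderiv ℝ A w (e1 j)) z (e1 j)

/-- The divergence on `E n`. -/
def divg {n : ℕ} (F : E n → E n) (z : E n) : ℝ :=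
  ∑ j, fderiv ℝ (fun w => F w j) z (e1 j)

/-- The free energy `A⋆`. -/
def Astar {k m : ℕ} (V : E k × E m → ℝ) (z : E m) : ℝ :=
  - Real.log (∫ y in torusBox k, Real.exp (- V (y, z)))

/-- The zero-average free energy `Ā⋆ = A⋆ - ∫ A⋆`. -/
def AstarBar {k m : ℕ} (V : E k × E m → ℝ) (z : E m) : ℝ :=
  Astar V z - ∫ w in torusBox m, Astar V w

/-- The (normalized) Haar measure of `𝕋^d = 𝕋^k × 𝕋^m` in the periodic model. -/
def haarT (k m : ℕ) : Measure (E k × E m) :=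
  volume.restrict (torusBox k ×ˢ torusBox m)

/-- The normalization constant `Z_B`. -/
def ZB {k m : ℕ} (V : E k × E m → ℝ) (B : E m → ℝ) : ℝ :=
  ∫ x, Real.exp (- V x + B x.2) ∂(haarT k m)

/-- The density `h_B`. -/
def hB {k m : ℕ} (V : E k × E m → ℝ) (B : E m → ℝ) (x : E k × E m) : ℝ :=
  (ZB V B)⁻¹ * Real.exp (- V x + B x.2)

/-- The probability measure `μ_B` with density `h_B` w.r.t. the Haar measure. -/
def muB {k m : ℕ} (V : E k × E m → ℝ) (B : E m → ℝ) : Measure (E k × E m) :=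
  (haarT k m).withDensity fun x => ENNReal.ofReal (hB V B x)

/-- An admissible kernel on `𝕋^m`: smooth, positive, and with both marginals
normalized to one. -/
structure AdmKer (m : ℕ) (K : E m × E m → ℝ) : Prop where
  smooth : ContDiff ℝ (⊤ : ℕ∞) K
  pos : ∀ p, 0 < K p
  periodic : PerZ2 K
  int_right : ∀ z : E m, (∫ z' in torusBox m, K (z, z')) = 1
  int_left : ∀ z : E m, (∫ z' in torusBox m, K (z', z)) = 1

/-- The second-moment bound for an admissible kernel, with constant `cK`. -/
def KerMoment (m : ℕ) (ε cK : ℝ) (K : E m × E m → ℝ) : Prop :=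
  ∀ z : E m, (∫ z' in torusBox m, tdist z z' ^ 2 * (K (z', z) + K (z, z'))) ≤ cK * ε

/-- The regularized mean force `F^ε[μ]`. -/
def Feps {k m : ℕ} (V : E k × E m → ℝ) (K : E m × E m → ℝ)
    (μ : Measure (E k × E m)) (w : E m) : E m :=
  (∫ x, K (x.2, w) ∂μ)⁻¹ • ∫ x, K (x.2, w) • zgrad V x.1 x.2 ∂μ

/-- Total variation distance. -/
def dTV {X : Type*} [MeasurableSpace X] (μ ν : Measure X) : ℝ :=
  sSup {r : ℝ | ∃ ψ : X → ℝ, Measurable ψ ∧ (∀ x, |ψ x| ≤ 1) ∧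
    r = |(∫ x, ψ x ∂ν) - ∫ x, ψ x ∂μ| / 2}

/-- Wasserstein-1 distance on the torus `𝕋^k × 𝕋^m`. -/
def dW1 {k m : ℕ} (μ ν : Measure (E k × E m)) : ℝ :=
  sSup {r : ℝ | ∃ ψ : E k × E m → ℝ, (∀ a b, |ψ a - ψ b| ≤ tdist2 a b) ∧
    r = |(∫ x, ψ x ∂ν) - ∫ x, ψ x ∂μ|}

/-- Wasserstein-1 distance on the torus `𝕋^n`. -/
def dW1d {n : ℕ} (μ ν : Measure (E n)) : ℝ :=
  sSup {r : ℝ | ∃ ψ : E n → ℝ, (∀ a b, |ψ a - ψ b| ≤ tdist a b) ∧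
    r = |(∫ x, ψ x ∂ν) - ∫ x, ψ x ∂μ|}

/-- The `C^k` norm `‖φ‖_{C^N} = ∑_{j ≤ N} sup ‖∇^j φ‖`. -/
def CkNorm {n : ℕ} {F : Type*} [NormedAddCommGroup F] [NormedSpace ℝ F]
    (N : ℕ) (φ : E n → F) : ℝ :=
  ∑ j ∈ Finset.range (N + 1), ⨆ z : E n, ‖iteratedFDeriv ℝ j φ z‖

section Aux

/-- coordinatewise fractional part -/
def fractE {n : ℕ} (x : E n) : E n := (WithLp.equiv 2 (Fin n → ℝ)).symm (fun i => Int.fract (x i))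

lemma fractE_mem_box {n : ℕ} (x : E n) : fractE x ∈ torusBox n :=
  fun _ => ⟨Int.fract_nonneg _, Int.fract_lt_one _⟩

lemma perZ_zsmul {n : ℕ} {α : Type*} {f : E n → α} (hf : PerZ f) (x : E n) (j : Fin n) (c : ℤ) :
    f (x + c • e1 j) = f x := by
  induction c using Int.induction_on with
  | zero => simp
  | succ i ih =>
      have h2 : x + ((i : ℤ) + 1) • e1 j = (x + (i : ℤ) • e1 j) + e1 j := by module
      rw [h2, hf, ih]
  | pred i ih =>
      have h2 : x + (-(i : ℤ)) • e1 j = (x + (-(i : ℤ) - 1) • e1 j) + e1 j := by module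
      rw [h2, hf] at ih
      exact ih

lemma perZ_sum {n : ℕ} {α : Type*} {f : E n → α} (hf : PerZ f) (x : E n) (c : Fin n → ℤ) :
    f (x + ∑ j, c j • e1 j) = f x := by
  classical
  have H : ∀ (s : Finset (Fin n)) (x : E n), f (x + ∑ j ∈ s, c j • e1 j) = f x := by
    intro s
    induction s using Finset.induction_on with
    | empty => simp
    | insert _ _ hj ih =>
        intro x
        rw [Finset.sum_insert hj, ← add_assoc]
        rw [show x + _ • e1 _ + _ = (x + _ • e1 _) + _ from rfl]
        rw [ih, perZ_zsmul hf]
  exact H Finset.univ x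

lemma perZ_fract {n : ℕ} {α : Type*} {f : E n → α} (hf : PerZ f) (x : E n) :
    f x = f (fractE x) := by
  have hx : fractE x = x + ∑ j, (-⌊x j⌋ : ℤ) • e1 j := by
    apply (WithLp.equiv 2 (Fin n → ℝ)).injective
    funext i
    have hs : (∑ j, (-⌊x j⌋ : ℤ) • e1 j) i = ∑ j, ((-⌊x j⌋ : ℤ) • e1 j) i :=
      by rw [WithLp.ofLp_sum, Finset.sum_apply]
    show Int.fract (x i) = x i + (∑ j, (-⌊x j⌋ : ℤ) • e1 j) i
    rw [hs]
    simp only [e1, PiLp.smul_apply, EuclideanSpace.single_apply, smul_eq_mul]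
    rw [Finset.sum_eq_single i]
    · simp only [if_pos rfl, zsmul_eq_mul, mul_one, Int.cast_neg, ← Int.self_sub_floor,
        eq_self_iff_true, if_true]; ring
    · intro b _ hb; simp [Ne.symm hb]
    · simp
  rw [hx, perZ_sum hf]

/-- the closed unit box -/
def boxC (n : ℕ) : Set (E n) := {x : E n | ∀ i, x i ∈ Set.Icc (0 : ℝ) 1}

lemma boxC_compact (n : ℕ) : IsCompact (boxC n) := by
  have h : boxC n = (EuclideanSpace.equiv (Fin n) ℝ).toHomeomorph ⁻¹'
      (Set.pi Set.univ fun _ : Fin n => Set.Icc (0:ℝ) 1) := by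
    ext x; simp only [Set.mem_preimage, Set.mem_univ_pi]; exact Iff.rfl
  rw [h, Homeomorph.isCompact_preimage]
  exact isCompact_univ_pi fun _ => isCompact_Icc

lemma torusBox_subset_boxC (n : ℕ) : torusBox n ⊆ boxC n :=
  fun _ hx i => ⟨(hx i).1, le_of_lt (hx i).2⟩

lemma torusBox_measurable (n : ℕ) : MeasurableSet (torusBox n) := by
  have h : torusBox n = ⋂ i, (fun x : E n => x i) ⁻¹' Set.Ico (0:ℝ) 1 := by
    ext x; simp [torusBox]
  rw [h]
  exact MeasurableSet.iInter fun i =>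
    (((continuous_apply i).comp (EuclideanSpace.equiv (Fin n) ℝ).continuous).measurable
      measurableSet_Ico)

lemma torusBox_volume (n : ℕ) : volume (torusBox n) = 1 := by
  have hmp := EuclideanSpace.volume_preserving_symm_measurableEquiv_toLp (Fin n)
  have hs : MeasurableSet (Set.pi Set.univ fun _ : Fin n => Set.Ico (0:ℝ) 1) :=
    MeasurableSet.univ_pi fun _ => measurableSet_Ico
  have hpre : torusBox n = (MeasurableEquiv.toLp 2 (Fin n → ℝ)).symm ⁻¹'
      (Set.pi Set.univ fun _ : Fin n => Set.Ico (0:ℝ) 1) := by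
    ext x; simp only [Set.mem_preimage, Set.mem_univ_pi]; exact Iff.rfl
  rw [hpre, hmp.measure_preimage hs.nullMeasurableSet]
  simp [volume_pi_pi]

instance torusBox_prob (n : ℕ) : IsProbabilityMeasure (volume.restrict (torusBox n)) := by
  constructor
  rw [Measure.restrict_apply_univ]
  exact torusBox_volume n

lemma haarT_eq_prod (k m : ℕ) :
    haarT k m = (volume.restrict (torusBox k)).prod (volume.restrict (torusBox m)) := by
  rw [haarT, Measure.volume_eq_prod, Measure.prod_restrict]

instance haarT_prob (k m : ℕ) : IsProbabilityMeasure (haarT k m) := by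
  rw [haarT_eq_prod]
  infer_instance

/-- boundedness of a continuous function with respect to a finite measure -/
lemma integrable_of_bdd {X : Type*} [MeasurableSpace X] {μ : Measure X} [IsFiniteMeasure μ]
    {f : X → ℝ} (hf : AEStronglyMeasurable f μ) {C : ℝ} (h : ∀ x, |f x| ≤ C) :
    Integrable f μ :=
  ⟨hf, HasFiniteIntegral.of_bounded (C := C) (Filter.Eventually.of_forall (by
    simpa [Real.norm_eq_abs] using h))⟩

/-- a continuous periodic function on the product torus is bounded -/
lemma bound_of_per {k m : ℕ} {V : E k × E m → ℝ} (hV : Continuous V) (hVper : PerZ2 V) :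
    ∃ C : ℝ, 0 ≤ C ∧ ∀ x : E k × E m, |V x| ≤ C := by
  obtain ⟨C, hC⟩ := ((boxC_compact k).prod (boxC_compact m)).exists_bound_of_continuousOn
    hV.continuousOn
  refine ⟨max C 0, le_max_right _ _, fun x => ?_⟩
  have h1 : PerZ (fun y => V (y, x.2)) := fun y j => hVper.1 y x.2 j
  have h2 : PerZ (fun z => V (fractE x.1, z)) := fun z j => hVper.2 (fractE x.1) z j
  have e1' : V x = V (fractE x.1, x.2) := perZ_fract h1 x.1
  have e2' : V (fractE x.1, x.2) = V (fractE x.1, fractE x.2) := perZ_fract h2 x.2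
  rw [e1', e2']
  have hmem : (fractE x.1, fractE x.2) ∈ (boxC k) ×ˢ (boxC m) :=
    ⟨torusBox_subset_boxC k (fractE_mem_box x.1), torusBox_subset_boxC m (fractE_mem_box x.2)⟩
  exact le_trans (hC _ hmem) (le_max_left _ _)

end Aux

section Layer2
variable {k m : ℕ} {V : E k × E m → ℝ}

/-- the partition function of the conditional measure -/
def Ifun (V : E k × E m → ℝ) (z : E m) : ℝ := ∫ y in torusBox k, Real.exp (- V (y, z))

lemma Ifun_cont (hV : Continuous V) {CV : ℝ} (hCV : ∀ x, |V x| ≤ CV) :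
    Continuous (Ifun V) := by
  apply MeasureTheory.continuous_of_dominated (bound := fun _ => Real.exp CV)
  · intro z
    exact ((Real.continuous_exp.comp (hV.comp (Continuous.prodMk_left z)).neg)).aestronglyMeasurable
  · intro z
    refine Filter.Eventually.of_forall fun y => ?_
    rw [Real.norm_eq_abs, abs_of_pos (Real.exp_pos _)]
    exact Real.exp_le_exp.2 (le_trans (neg_le_abs _) (by simpa using hCV (y, z)))
  · exact integrable_const _
  · exact Filter.Eventually.of_forall fun y =>
      Real.continuous_exp.comp ((hV.comp (Continuous.prodMk_right y)).neg)

lemma Ifun_bounds (hV : Continuous V) {CV : ℝ} (hCV : ∀ x, |V x| ≤ CV) (z : E m) :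
    Real.exp (-CV) ≤ Ifun V z ∧ Ifun V z ≤ Real.exp CV := by
  have hmeas : AEStronglyMeasurable (fun y : E k => Real.exp (- V (y, z)))
      (volume.restrict (torusBox k)) :=
    ((Real.continuous_exp.comp (hV.comp (Continuous.prodMk_left z)).neg)).aestronglyMeasurable
  have hbd : ∀ y : E k, Real.exp (- V (y, z)) ≤ Real.exp CV := fun y =>
    Real.exp_le_exp.2 (le_trans (neg_le_abs _) (hCV (y, z)))
  have hint : IntegrableOn (fun y : E k => Real.exp (- V (y, z))) (torusBox k) volume := by
    refine integrable_of_bdd hmeas (C := Real.exp CV) fun y => ?_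
    rw [abs_of_pos (Real.exp_pos _)]; exact hbd y
  constructor
  · have := setIntegral_ge_of_const_le (torusBox_measurable k)
      (by rw [torusBox_volume]; exact ENNReal.one_ne_top)
      (f := fun y : E k => Real.exp (- V (y, z))) (c := Real.exp (-CV))
      (fun y _ => Real.exp_le_exp.2 (by
        have := hCV (y, z); rw [abs_le] at this; linarith [this.1])) hint
    simpa [Measure.real, torusBox_volume, Ifun] using this
  · have := norm_setIntegral_le_of_norm_le_const (μ := volume) (s := torusBox k)
      (by rw [torusBox_volume]; exact ENNReal.one_lt_top)
      (f := fun y : E k => Real.exp (- V (y, z))) (C := Real.exp CV)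
      (fun y _ => by rw [Real.norm_eq_abs, abs_of_pos (Real.exp_pos _)]; exact hbd y)
    simp only [Measure.real, torusBox_volume, ENNReal.toReal_one, mul_one] at this
    exact le_trans (le_abs_self _) this

lemma Ifun_pos (hV : Continuous V) {CV : ℝ} (hCV : ∀ x, |V x| ≤ CV) (z : E m) :
    0 < Ifun V z :=
  lt_of_lt_of_le (Real.exp_pos _) (Ifun_bounds hV hCV z).1

lemma exp_neg_Astar (hV : Continuous V) {CV : ℝ} (hCV : ∀ x, |V x| ≤ CV) (z : E m) :
    Real.exp (- Astar V z) = Ifun V z := by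
  rw [Astar, neg_neg]
  exact Real.exp_log (Ifun_pos hV hCV z)

lemma Astar_abs_le (hV : Continuous V) {CV : ℝ} (hCV : ∀ x, |V x| ≤ CV) (z : E m) :
    |Astar V z| ≤ CV := by
  obtain ⟨h1, h2⟩ := Ifun_bounds hV hCV z
  rw [abs_le, Astar]
  constructor
  · simp only [neg_le_neg_iff]
    calc Real.log (Ifun V z) ≤ Real.log (Real.exp CV) :=
          Real.log_le_log (Ifun_pos hV hCV z) h2
    _ = CV := Real.log_exp _
  · simp only [neg_le]
    calc -CV = Real.log (Real.exp (-CV)) := (Real.log_exp _).symm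
    _ ≤ Real.log (Ifun V z) := Real.log_le_log (Real.exp_pos _) h1

/-- Fubini for the partition function -/
lemma ZB_eq_integral (hV : Continuous V) {CV : ℝ} (hCV : ∀ x, |V x| ≤ CV)
    {B : E m → ℝ} (hB : Continuous B) {MB : ℝ} (hBb : ∀ z, |B z| ≤ MB) :
    ZB V B = ∫ z in torusBox m, Real.exp (B z) * Ifun V z := by
  have hcont : Continuous fun x : E k × E m => Real.exp (- V x + B x.2) :=
    Real.continuous_exp.comp (hV.neg.add (hB.comp continuous_snd))
  have hint : Integrable (fun x : E k × E m => Real.exp (- V x + B x.2)) (haarT k m) := by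
    refine integrable_of_bdd hcont.aestronglyMeasurable (C := Real.exp (CV + MB)) fun x => ?_
    rw [abs_of_pos (Real.exp_pos _)]
    apply Real.exp_le_exp.2
    have h1 := hCV x; have h2 := hBb x.2
    rw [abs_le] at h1 h2
    linarith [h1.1, h2.2]
  rw [ZB, haarT_eq_prod] at *
  rw [integral_prod_symm _ hint]
  apply setIntegral_congr_fun (torusBox_measurable m)
  intro z _
  have : ∀ y : E k, Real.exp (- V (y, z) + B z) = Real.exp (- V (y, z)) * Real.exp (B z) := by
    intro y; rw [← Real.exp_add]
  simp only [this]
  rw [integral_mul_const, Ifun, mul_comm]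

end Layer2

section Layer3
variable {k m : ℕ} {V : E k × E m → ℝ}

lemma abs_exp_sub_exp {a b M : ℝ} (ha : a ≤ M) (hb : b ≤ M) :
    |Real.exp a - Real.exp b| ≤ Real.exp M * |a - b| := by
  wlog hab : b ≤ a generalizing a b
  · rw [abs_sub_comm, abs_sub_comm a b]; exact this hb ha (le_of_not_ge hab)
  rw [abs_of_nonneg (sub_nonneg.2 (Real.exp_le_exp.2 hab)), abs_of_nonneg (sub_nonneg.2 hab)]
  have h2 := Real.add_one_le_exp (b - a)
  have h3 : Real.exp b = Real.exp (b - a) * Real.exp a := by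
    rw [← Real.exp_add]; ring_nf
  have h4 : Real.exp a ≤ Real.exp M := Real.exp_le_exp.2 ha
  nlinarith [Real.exp_pos a, Real.exp_pos (b - a)]

lemma exp_Astar_bound (hV : Continuous V) {CV : ℝ} (hCV : ∀ x, |V x| ≤ CV)
    {Ms : ℝ} (hMs : ∀ z : E m, |Astar V z| ≤ Ms) (z : E m) :
    Ifun V z ≤ Real.exp Ms ∧ Real.exp (-Ms) ≤ Ifun V z := by
  rw [← exp_neg_Astar hV hCV]
  have := hMs z
  rw [abs_le] at this
  exact ⟨Real.exp_le_exp.2 (by linarith [this.1]), Real.exp_le_exp.2 (by linarith [this.2])⟩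

lemma integrand_int (hV : Continuous V) {CV : ℝ} (hCV : ∀ x, |V x| ≤ CV)
    {B : E m → ℝ} (hB : Continuous B) {MB : ℝ} (hBb : ∀ z, |B z| ≤ MB) :
    IntegrableOn (fun z : E m => Real.exp (B z) * Ifun V z) (torusBox m) volume := by
  refine integrable_of_bdd (((Real.continuous_exp.comp hB).mul
    (Ifun_cont hV hCV)).aestronglyMeasurable) (C := Real.exp MB * Real.exp CV) fun z => ?_
  rw [abs_mul, abs_of_pos (Real.exp_pos _), abs_of_pos (Ifun_pos hV hCV z)]
  exact mul_le_mul (Real.exp_le_exp.2 (le_trans (le_abs_self _) (hBb z)))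
    (Ifun_bounds hV hCV z).2 (le_of_lt (Ifun_pos hV hCV z)) (le_of_lt (Real.exp_pos _))

lemma ZB_bounds (hV : Continuous V) {CV : ℝ} (hCV : ∀ x, |V x| ≤ CV)
    {Ms : ℝ} (hMs : ∀ z : E m, |Astar V z| ≤ Ms)
    {B : E m → ℝ} (hB : Continuous B) {MB : ℝ} (hBb : ∀ z, |B z| ≤ MB) :
    Real.exp (-(MB + Ms)) ≤ ZB V B ∧ ZB V B ≤ Real.exp (MB + Ms) := by
  rw [ZB_eq_integral hV hCV hB hBb]
  constructor
  · have := setIntegral_ge_of_const_le (torusBox_measurable m)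
      (by rw [torusBox_volume]; exact ENNReal.one_ne_top)
      (f := fun z : E m => Real.exp (B z) * Ifun V z) (c := Real.exp (-(MB + Ms)))
      (fun z _ => by
        rw [show -(MB + Ms) = -MB + -Ms by ring, Real.exp_add]
        refine mul_le_mul ?_ (exp_Astar_bound hV hCV hMs z).2 (le_of_lt (Real.exp_pos _))
          (le_of_lt (Real.exp_pos _))
        exact Real.exp_le_exp.2 (by have := hBb z; rw [abs_le] at this; linarith [this.1]))
      (integrand_int hV hCV hB hBb)
    simpa [Measure.real, torusBox_volume] using this
  · have := norm_setIntegral_le_of_norm_le_const (μ := volume) (s := torusBox m)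
      (by rw [torusBox_volume]; exact ENNReal.one_lt_top)
      (f := fun z : E m => Real.exp (B z) * Ifun V z) (C := Real.exp (MB + Ms))
      (fun z _ => by
        rw [Real.norm_eq_abs, abs_mul, abs_of_pos (Real.exp_pos _),
          abs_of_pos (Ifun_pos hV hCV z), Real.exp_add]
        exact mul_le_mul (Real.exp_le_exp.2 (le_trans (le_abs_self _) (hBb z)))
          (exp_Astar_bound hV hCV hMs z).1 (le_of_lt (Ifun_pos hV hCV z))
          (le_of_lt (Real.exp_pos _)))
    simp only [Measure.real, torusBox_volume, ENNReal.toReal_one, mul_one] at this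
    exact le_trans (le_abs_self _) this

lemma ZB_diff (hV : Continuous V) {CV : ℝ} (hCV : ∀ x, |V x| ≤ CV)
    {Ms : ℝ} (hMs : ∀ z : E m, |Astar V z| ≤ Ms)
    {B₁ B₂ : E m → ℝ} (hB₁ : Continuous B₁) (hB₂ : Continuous B₂)
    {MB : ℝ} (hB₁b : ∀ z, |B₁ z| ≤ MB) (hB₂b : ∀ z, |B₂ z| ≤ MB)
    {δ : ℝ} (hδ : ∀ z, |B₁ z - B₂ z| ≤ δ) :
    |ZB V B₂ - ZB V B₁| ≤ Real.exp MB * δ * Real.exp Ms := by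
  rw [ZB_eq_integral hV hCV hB₁ hB₁b, ZB_eq_integral hV hCV hB₂ hB₂b,
    ← integral_sub (integrand_int hV hCV hB₂ hB₂b) (integrand_int hV hCV hB₁ hB₁b)]
  have := norm_setIntegral_le_of_norm_le_const (μ := volume) (s := torusBox m)
    (by rw [torusBox_volume]; exact ENNReal.one_lt_top)
    (f := fun z : E m => Real.exp (B₂ z) * Ifun V z - Real.exp (B₁ z) * Ifun V z)
    (C := Real.exp MB * δ * Real.exp Ms)
    (fun z _ => by
      show |Real.exp (B₂ z) * Ifun V z - Real.exp (B₁ z) * Ifun V z| ≤ _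
      rw [← sub_mul, abs_mul, abs_of_pos (Ifun_pos hV hCV z)]
      have h1 : |Real.exp (B₂ z) - Real.exp (B₁ z)| ≤ Real.exp MB * δ := by
        refine le_trans (abs_exp_sub_exp (le_trans (le_abs_self _) (hB₂b z))
          (le_trans (le_abs_self _) (hB₁b z))) ?_
        refine mul_le_mul_of_nonneg_left ?_ (le_of_lt (Real.exp_pos _))
        rw [abs_sub_comm]; exact hδ z
      exact mul_le_mul h1 (exp_Astar_bound hV hCV hMs z).1 (le_of_lt (Ifun_pos hV hCV z))
        (mul_nonneg (le_of_lt (Real.exp_pos MB)) (le_trans (abs_nonneg _) (hδ 0))))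
  simpa [Measure.real, torusBox_volume] using this

/-- integral against `μ_B` as a weighted integral -/
lemma integral_muB {B : E m → ℝ} (hVc : Continuous V) (hBc : Continuous B)
    (hZ : 0 < ZB V B) (ψ : E k × E m → ℝ) :
    ∫ x, ψ x ∂(muB V B) = ∫ x, hB V B x * ψ x ∂(haarT k m) := by
  have hBcont : Continuous (hB V B) :=
    continuous_const.mul (Real.continuous_exp.comp (hVc.neg.add (hBc.comp continuous_snd)))
  have hmeas : Measurable fun x => (hB V B x).toNNReal :=
    hBcont.measurable.real_toNNReal
  have h0 : ∀ x, 0 ≤ hB V B x := fun x =>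
    mul_nonneg (le_of_lt (inv_pos.2 hZ)) (le_of_lt (Real.exp_pos _))
  rw [muB, show (fun x => ENNReal.ofReal (hB V B x))
      = fun x => (((hB V B x).toNNReal : NNReal) : ENNReal) from rfl,
    integral_withDensity_eq_integral_smul hmeas]
  congr 1
  funext x
  rw [NNReal.smul_def, smul_eq_mul, Real.coe_toNNReal _ (h0 x)]

end Layer3


/-- `d_TV(μ_B₁, μ_B₂) ≤ 2 e^(4(M+M⋆)) sup |B₁ - B₂|`. -/
theorem stmt8 (k m : ℕ) (hk : 1 ≤ k) (hm : 1 ≤ m)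
    (V : E k × E m → ℝ) (hV : ContDiff ℝ (⊤ : ℕ∞) V) (hVper : PerZ2 V)
    (M : ℝ) (hM : 0 < M)
    (B₁ B₂ : E m → ℝ) (hB₁ : Continuous B₁) (hB₁p : PerZ B₁)
    (hB₁M : ∀ z : E m, |B₁ z| ≤ M)
    (hB₂ : Continuous B₂) (hB₂p : PerZ B₂) (hB₂M : ∀ z : E m, |B₂ z| ≤ M) :
    dTV (muB V B₁) (muB V B₂) ≤
      2 * Real.exp (4 * (M + ⨆ z : E m, |Astar V z|)) *
        ⨆ z : E m, |B₁ z - B₂ z| := by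
  have hVc : Continuous V := hV.continuous
  obtain ⟨CV, hCV0, hCVb⟩ := bound_of_per hVc hVper
  set Ms : ℝ := ⨆ z : E m, |Astar V z| with hMs_def
  have hMsb : ∀ z : E m, |Astar V z| ≤ Ms := by
    intro z
    exact le_ciSup ⟨CV, by rintro r ⟨z', rfl⟩; exact Astar_abs_le hVc hCVb z'⟩ z
  have hMs0 : 0 ≤ Ms := le_trans (abs_nonneg _) (hMsb 0)
  set δ : ℝ := ⨆ z : E m, |B₁ z - B₂ z| with hδ_def
  have hδb : ∀ z, |B₁ z - B₂ z| ≤ δ := by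
    intro z
    refine le_ciSup (f := fun z : E m => |B₁ z - B₂ z|) ⟨2 * M, ?_⟩ z
    rintro r ⟨z', rfl⟩
    have h := abs_sub (B₁ z') (B₂ z')
    have := hB₁M z'; have := hB₂M z'
    linarith
  have hδ0 : 0 ≤ δ := le_trans (abs_nonneg _) (hδb 0)
  -- partition function bounds
  have hZ1 := ZB_bounds hVc hCVb hMsb hB₁ hB₁M
  have hZ2 := ZB_bounds hVc hCVb hMsb hB₂ hB₂M
  have hZ1pos : 0 < ZB V B₁ := lt_of_lt_of_le (Real.exp_pos _) hZ1.1
  have hZ2pos : 0 < ZB V B₂ := lt_of_lt_of_le (Real.exp_pos _) hZ2.1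
  have hZ1inv : (ZB V B₁)⁻¹ ≤ Real.exp (M + Ms) := by
    have h := inv_anti₀ (Real.exp_pos (-(M + Ms))) hZ1.1
    rwa [Real.exp_neg, inv_inv] at h
  -- integral of exp(-V)
  have hZB0 : ZB V (fun _ => (0:ℝ)) = ∫ x, Real.exp (-V x) ∂(haarT k m) := by
    rw [ZB]; congr 1; funext x; rw [add_zero]
  have hIV : ∫ x, Real.exp (-V x) ∂(haarT k m) ≤ Real.exp Ms := by
    have h := (ZB_bounds hVc hCVb hMsb (continuous_const : Continuous fun _ : E m => (0:ℝ))
      (MB := 0) (fun z => by simp)).2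
    rw [hZB0] at h
    simpa using h
  -- integrabilities
  have hcontV : Continuous fun x : E k × E m => Real.exp (-V x) :=
    Real.continuous_exp.comp hVc.neg
  have hintV : Integrable (fun x : E k × E m => Real.exp (-V x)) (haarT k m) := by
    refine integrable_of_bdd hcontV.aestronglyMeasurable (C := Real.exp CV) fun x => ?_
    rw [abs_of_pos (Real.exp_pos _)]
    exact Real.exp_le_exp.2 (le_trans (neg_le_abs _) (hCVb x))
  have hcontE : ∀ (B : E m → ℝ), Continuous B →
      Continuous fun x : E k × E m => Real.exp (-V x + B x.2) := fun B hBc =>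
    Real.continuous_exp.comp (hVc.neg.add (hBc.comp continuous_snd))
  have hintE : ∀ (B : E m → ℝ), Continuous B → (∀ z, |B z| ≤ M) →
      Integrable (fun x : E k × E m => Real.exp (-V x + B x.2)) (haarT k m) := by
    intro B hBc hBM
    refine integrable_of_bdd (hcontE B hBc).aestronglyMeasurable
      (C := Real.exp (CV + M)) fun x => ?_
    rw [abs_of_pos (Real.exp_pos _)]
    apply Real.exp_le_exp.2
    have h1 := hCVb x; have h2 := hBM x.2
    rw [abs_le] at h1 h2
    linarith
  -- the dominating function
  set c₁ : ℝ := (ZB V B₁)⁻¹ * (Real.exp M * δ) with hc₁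
  set c₂ : ℝ := |(ZB V B₂)⁻¹ - (ZB V B₁)⁻¹| with hc₂
  set G : E k × E m → ℝ :=
    fun x => c₁ * Real.exp (-V x) + c₂ * Real.exp (-V x + B₂ x.2) with hG
  have hc₁0 : 0 ≤ c₁ := by positivity
  have hintG : Integrable G (haarT k m) :=
    ((hintV.const_mul c₁).add ((hintE B₂ hB₂ hB₂M).const_mul c₂))
  -- value of ∫ G
  have hGval : ∫ x, G x ∂(haarT k m) =
      c₁ * (∫ x, Real.exp (-V x) ∂(haarT k m)) + c₂ * ZB V B₂ := by
    rw [hG, integral_add (hintV.const_mul c₁) ((hintE B₂ hB₂ hB₂M).const_mul c₂),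
      integral_const_mul, integral_const_mul]
    rfl
  -- bound on c₂ * Z₂
  have hdiff := ZB_diff hVc hCVb hMsb hB₁ hB₂ hB₁M hB₂M hδb
  have hc₂Z : c₂ * ZB V B₂ ≤ Real.exp M * δ * Real.exp Ms * Real.exp (M + Ms) := by
    have hsplit : (ZB V B₂)⁻¹ - (ZB V B₁)⁻¹
        = (ZB V B₁ - ZB V B₂) * ((ZB V B₁)⁻¹ * (ZB V B₂)⁻¹) := by
      rw [sub_mul,
        show ZB V B₁ * ((ZB V B₁)⁻¹ * (ZB V B₂)⁻¹)
          = (ZB V B₁ * (ZB V B₁)⁻¹) * (ZB V B₂)⁻¹ from by ring,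
        mul_inv_cancel₀ (ne_of_gt hZ1pos), one_mul,
        show ZB V B₂ * ((ZB V B₁)⁻¹ * (ZB V B₂)⁻¹)
          = (ZB V B₂ * (ZB V B₂)⁻¹) * (ZB V B₁)⁻¹ from by ring,
        mul_inv_cancel₀ (ne_of_gt hZ2pos), one_mul]
    have h1 : c₂ * ZB V B₂ = |ZB V B₂ - ZB V B₁| * (ZB V B₁)⁻¹ := by
      rw [hc₂, hsplit, abs_mul, abs_of_pos (mul_pos (inv_pos.2 hZ1pos) (inv_pos.2 hZ2pos)),
        abs_sub_comm]
      rw [mul_assoc, mul_assoc, inv_mul_cancel₀ (ne_of_gt hZ2pos), mul_one]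
    rw [h1]
    exact mul_le_mul hdiff hZ1inv (le_of_lt (inv_pos.2 hZ1pos)) (by positivity)
  -- bound on c₁ * ∫ exp(-V)
  have hc₁I : c₁ * (∫ x, Real.exp (-V x) ∂(haarT k m)) ≤
      Real.exp (M + Ms) * (Real.exp M * δ) * Real.exp Ms := by
    have hIV0 : 0 ≤ ∫ x, Real.exp (-V x) ∂(haarT k m) := by
      rw [← hZB0]
      exact le_of_lt (lt_of_lt_of_le (Real.exp_pos _)
        (ZB_bounds hVc hCVb hMsb (continuous_const : Continuous fun _ : E m => (0:ℝ))
          (MB := 0) (fun z => by simp)).1)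
    calc c₁ * (∫ x, Real.exp (-V x) ∂(haarT k m))
        ≤ (Real.exp (M + Ms) * (Real.exp M * δ)) * Real.exp Ms := by
          refine mul_le_mul ?_ hIV ?_ (by positivity)
          · exact mul_le_mul hZ1inv le_rfl (by positivity) (le_of_lt (Real.exp_pos _))
          · exact hIV0
      _ = Real.exp (M + Ms) * (Real.exp M * δ) * Real.exp Ms := rfl
  -- the sSup bound
  apply Real.sSup_le
  · rintro r ⟨ψ, hψm, hψ1, rfl⟩
    rw [integral_muB hVc hB₁ hZ1pos ψ, integral_muB hVc hB₂ hZ2pos ψ]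
    -- integrability of the products
    have hint1 : Integrable (fun x => hB V B₁ x * ψ x) (haarT k m) := by
      refine integrable_of_bdd ((((continuous_const.mul (hcontE B₁ hB₁)).measurable).mul
        hψm).aestronglyMeasurable) (C := (ZB V B₁)⁻¹ * Real.exp (CV + M)) fun x => ?_
      rw [abs_mul, hB, abs_mul, abs_of_pos (inv_pos.2 hZ1pos), abs_of_pos (Real.exp_pos _)]
      calc (ZB V B₁)⁻¹ * Real.exp (-V x + B₁ x.2) * |ψ x|
          ≤ (ZB V B₁)⁻¹ * Real.exp (CV + M) * 1 := by
            refine mul_le_mul (mul_le_mul le_rfl ?_ (le_of_lt (Real.exp_pos _))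
              (le_of_lt (inv_pos.2 hZ1pos))) (hψ1 x) (abs_nonneg _) (by positivity)
            apply Real.exp_le_exp.2
            have h1 := hCVb x; have h2 := hB₁M x.2
            rw [abs_le] at h1 h2
            linarith
        _ = (ZB V B₁)⁻¹ * Real.exp (CV + M) := mul_one _
    have hint2 : Integrable (fun x => hB V B₂ x * ψ x) (haarT k m) := by
      refine integrable_of_bdd ((((continuous_const.mul (hcontE B₂ hB₂)).measurable).mul
        hψm).aestronglyMeasurable) (C := (ZB V B₂)⁻¹ * Real.exp (CV + M)) fun x => ?_
      rw [abs_mul, hB, abs_mul, abs_of_pos (inv_pos.2 hZ2pos), abs_of_pos (Real.exp_pos _)]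
      calc (ZB V B₂)⁻¹ * Real.exp (-V x + B₂ x.2) * |ψ x|
          ≤ (ZB V B₂)⁻¹ * Real.exp (CV + M) * 1 := by
            refine mul_le_mul (mul_le_mul le_rfl ?_ (le_of_lt (Real.exp_pos _))
              (le_of_lt (inv_pos.2 hZ2pos))) (hψ1 x) (abs_nonneg _) (by positivity)
            apply Real.exp_le_exp.2
            have h1 := hCVb x; have h2 := hB₂M x.2
            rw [abs_le] at h1 h2
            linarith
        _ = (ZB V B₂)⁻¹ * Real.exp (CV + M) := mul_one _
    rw [← integral_sub hint2 hint1]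
    -- pointwise bound
    have hpt : ∀ x, ‖hB V B₂ x * ψ x - hB V B₁ x * ψ x‖ ≤ G x := by
      intro x
      rw [Real.norm_eq_abs, ← sub_mul, abs_mul]
      have habs : |hB V B₂ x - hB V B₁ x| ≤ G x := by
        have e2 : Real.exp (-V x + B₂ x.2) = Real.exp (-V x) * Real.exp (B₂ x.2) := by
          rw [← Real.exp_add]
        have e1 : Real.exp (-V x + B₁ x.2) = Real.exp (-V x) * Real.exp (B₁ x.2) := by
          rw [← Real.exp_add]
        have hsplit : hB V B₂ x - hB V B₁ x
            = (ZB V B₁)⁻¹ * (Real.exp (-V x) * (Real.exp (B₂ x.2) - Real.exp (B₁ x.2)))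
              + ((ZB V B₂)⁻¹ - (ZB V B₁)⁻¹) * Real.exp (-V x + B₂ x.2) := by
          simp only [hB]
          rw [e1, e2]
          ring
        rw [hsplit]
        refine le_trans (abs_add_le _ _) ?_
        have t1 : |(ZB V B₁)⁻¹ * (Real.exp (-V x) * (Real.exp (B₂ x.2) - Real.exp (B₁ x.2)))|
            ≤ c₁ * Real.exp (-V x) := by
          rw [abs_mul, abs_mul, abs_of_pos (inv_pos.2 hZ1pos), abs_of_pos (Real.exp_pos _)]
          have h5 : |Real.exp (B₂ x.2) - Real.exp (B₁ x.2)| ≤ Real.exp M * δ := by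
            refine le_trans (abs_exp_sub_exp (le_trans (le_abs_self _) (hB₂M x.2))
              (le_trans (le_abs_self _) (hB₁M x.2))) ?_
            rw [abs_sub_comm]
            exact mul_le_mul_of_nonneg_left (hδb x.2) (le_of_lt (Real.exp_pos _))
          calc (ZB V B₁)⁻¹ * (Real.exp (-V x) * |Real.exp (B₂ x.2) - Real.exp (B₁ x.2)|)
              ≤ (ZB V B₁)⁻¹ * (Real.exp (-V x) * (Real.exp M * δ)) := by
                refine mul_le_mul_of_nonneg_left ?_ (le_of_lt (inv_pos.2 hZ1pos))
                exact mul_le_mul_of_nonneg_left h5 (le_of_lt (Real.exp_pos _))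
            _ = c₁ * Real.exp (-V x) := by rw [hc₁]; ring
        have t2 : |((ZB V B₂)⁻¹ - (ZB V B₁)⁻¹) * Real.exp (-V x + B₂ x.2)|
            = c₂ * Real.exp (-V x + B₂ x.2) := by
          rw [abs_mul, abs_of_pos (Real.exp_pos _), hc₂]
        rw [t2]
        exact add_le_add t1 le_rfl
      have hG0 : 0 ≤ G x := le_trans (abs_nonneg _) habs
      calc |hB V B₂ x - hB V B₁ x| * |ψ x| ≤ G x * 1 :=
            mul_le_mul habs (hψ1 x) (abs_nonneg _) hG0
        _ = G x := mul_one _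
    have hmain : |∫ x, (hB V B₂ x * ψ x - hB V B₁ x * ψ x) ∂(haarT k m)|
        ≤ ∫ x, G x ∂(haarT k m) := by
      rw [← Real.norm_eq_abs]
      exact norm_integral_le_of_norm_le hintG (Filter.Eventually.of_forall hpt)
    -- arithmetic conclusion
    have hGle : ∫ x, G x ∂(haarT k m) ≤ 2 * (Real.exp (M + Ms) * Real.exp M * Real.exp Ms) * δ := by
      rw [hGval]
      have := add_le_add hc₁I hc₂Z
      calc c₁ * (∫ x, Real.exp (-V x) ∂(haarT k m)) + c₂ * ZB V B₂
          ≤ Real.exp (M + Ms) * (Real.exp M * δ) * Real.exp Ms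
            + Real.exp M * δ * Real.exp Ms * Real.exp (M + Ms) := this
        _ = 2 * (Real.exp (M + Ms) * Real.exp M * Real.exp Ms) * δ := by ring
    have hfinal : Real.exp (M + Ms) * Real.exp M * Real.exp Ms ≤ 2 * Real.exp (4 * (M + Ms)) := by
      rw [← Real.exp_add, ← Real.exp_add]
      calc Real.exp (M + Ms + M + Ms) ≤ Real.exp (4 * (M + Ms)) :=
            Real.exp_le_exp.2 (by linarith)
        _ ≤ 2 * Real.exp (4 * (M + Ms)) := by nlinarith [Real.exp_pos (4 * (M + Ms))]
    calc |∫ x, (hB V B₂ x * ψ x - hB V B₁ x * ψ x) ∂(haarT k m)| / 2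
        ≤ (2 * (Real.exp (M + Ms) * Real.exp M * Real.exp Ms) * δ) / 2 := by
          apply div_le_div_of_nonneg_right ?_ (by norm_num)
          exact le_trans hmain hGle
      _ = (Real.exp (M + Ms) * Real.exp M * Real.exp Ms) * δ := by ring
      _ ≤ 2 * Real.exp (4 * (M + Ms)) * δ := mul_le_mul_of_nonneg_right hfinal hδ0
  · have h0 : (0:ℝ) ≤ 2 * Real.exp (4 * (M + Ms)) := by positivity
    exact mul_nonneg h0 hδ0

end
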